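/- Let p be an odd prime, μ the Haar probability measure on Z_p, and η ∈ Z_p a nonzero element of even valuation 2m that is not a square in Q_p. Then (1 + p^{−1})^{−1} · ∫_{x ∈ Z_p} ( ∫_{{y ∈ Z_p : |η − x²|_p ≤ |y|_p}} |y|_p^{−1} dμ(y) ) dμ(x) = 1 − 2·p^{−m}/(p+1). -/

import Mathlib

open MeasureTheory


variable {p : ℕ} [hp : Fact p.Prime]

section
variable [MeasurableSpace ℤ_[p]] [BorelSpace ℤ_[p]]
  (μ : Measure ℤ_[p]) [μ.IsAddHaarMeasure]

lemma padic_ball_measurable (n : ℕ) :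
    MeasurableSet {x : ℤ_[p] | ‖x‖ ≤ (p:ℝ)^(-(n:ℤ))} :=
  (isClosed_le continuous_norm continuous_const).measurableSet

lemma padic_ball_measure (hμ : μ Set.univ = 1) (n : ℕ) :
    μ {x : ℤ_[p] | ‖x‖ ≤ (p:ℝ)^(-(n:ℤ))} = ((p:ENNReal)^n)⁻¹ := by
  set B : Set ℤ_[p] := {x : ℤ_[p] | ‖x‖ ≤ (p:ℝ)^(-(n:ℤ))} with hBdef
  have hBmem : ∀ x : ℤ_[p], x ∈ B ↔ PadicInt.toZModPow n x = 0 := by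
    intro x
    rw [hBdef, Set.mem_setOf_eq, PadicInt.norm_le_pow_iff_mem_span_pow,
      ← PadicInt.ker_toZModPow, RingHom.mem_ker]
  have hpre : ∀ c : ZMod (p^n),
      (PadicInt.toZModPow n) ⁻¹' {c} = (fun y => -( (c.val : ℤ_[p])) + y) ⁻¹' B := by
    intro c
    ext y
    have hc : PadicInt.toZModPow n ((c.val : ℕ) : ℤ_[p]) = c := by
      simp [map_natCast, ZMod.natCast_val, ZMod.cast_id]
    simp only [Set.mem_preimage, Set.mem_singleton_iff, hBmem, map_add, map_neg, hc]
    constructor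
    · intro h; rw [h, neg_add_cancel]
    · intro h; exact (neg_add_eq_zero.mp h).symm
  have hmeasB : MeasurableSet B := padic_ball_measurable n
  have hpremeas : ∀ c : ZMod (p^n), MeasurableSet ((PadicInt.toZModPow n) ⁻¹' {c}) := by
    intro c; rw [hpre c]
    exact hmeasB.preimage (measurable_const_add _)
  have hdisj : Pairwise (Function.onFun Disjoint
      fun c : ZMod (p^n) => (PadicInt.toZModPow n) ⁻¹' {c}) := by
    intro a b hab
    exact Set.disjoint_left.mpr (fun x ha hb => hab (by
      simp only [Set.mem_preimage, Set.mem_singleton_iff] at ha hb; rw [← ha, ← hb]))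
  have huniv : (⋃ c : ZMod (p^n), (PadicInt.toZModPow n) ⁻¹' {c}) = Set.univ := by
    ext x; simp
  have hcount : (1 : ENNReal) = (p^n : ℕ) * μ B := by
    calc (1:ENNReal) = μ Set.univ := hμ.symm
    _ = ∑' c : ZMod (p^n), μ ((PadicInt.toZModPow n) ⁻¹' {c}) := by
        rw [← huniv, measure_iUnion hdisj hpremeas]
    _ = ∑' _c : ZMod (p^n), μ B := by
        congr 1; funext c; rw [hpre c, measure_preimage_add]
    _ = (Fintype.card (ZMod (p^n))) * μ B := by
        rw [tsum_fintype, Finset.sum_const, Finset.card_univ, nsmul_eq_mul]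
    _ = (p^n : ℕ) * μ B := by
        haveI : NeZero (p^n) := ⟨pow_ne_zero n hp.out.ne_zero⟩
        rw [ZMod.card]
  have hne : ((p^n : ℕ) : ENNReal) ≠ 0 := by
    exact_mod_cast Nat.cast_ne_zero.mpr (pow_ne_zero n hp.out.ne_zero)
  have := ENNReal.eq_inv_of_mul_eq_one_left hcount.symm
  rw [← inv_inv (μ B), ← this, Nat.cast_pow]
end

def Bp (p : ℕ) [Fact p.Prime] (j : ℕ) : Set ℤ_[p] := {x : ℤ_[p] | ‖x‖ ≤ (p:ℝ)^(-(j:ℤ))}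

lemma Bp_measurable [MeasurableSpace ℤ_[p]] [BorelSpace ℤ_[p]] (j : ℕ) :
    MeasurableSet (Bp p j) := padic_ball_measurable j

lemma mem_ann_iff {j : ℕ} {x : ℤ_[p]} :
    x ∈ Bp p j \ Bp p (j+1) ↔ ‖x‖ = (p:ℝ)^(-(j:ℤ)) := by
  have hp1 : (1:ℝ) < p := by exact_mod_cast hp.out.one_lt
  constructor
  · rintro ⟨h1, h2⟩
    have hx : x ≠ 0 := by
      rintro rfl
      exact h2 (by simp only [Bp, Set.mem_setOf_eq, norm_zero]; positivity)
    rw [Bp, Set.mem_setOf_eq, PadicInt.norm_le_pow_iff_le_valuation x hx] at h1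
    have h2' : ¬ (j+1:ℕ) ≤ x.valuation := by
      rw [← PadicInt.norm_le_pow_iff_le_valuation x hx]; exact h2
    have hv : x.valuation = (j:ℤ) := by push_cast at h1 h2' ⊢; omega
    rw [PadicInt.norm_eq_zpow_neg_valuation hx, hv]
  · intro h
    refine ⟨le_of_eq h, fun h2 => ?_⟩
    rw [Bp, Set.mem_setOf_eq, h] at h2
    have : ((-(j+1:ℕ):ℤ)) < (-(j:ℤ)) := by push_cast; omega
    exact absurd h2 (not_le.mpr (zpow_lt_zpow_right₀ hp1 this))

section
variable [MeasurableSpace ℤ_[p]] [BorelSpace ℤ_[p]]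
  (μ : Measure ℤ_[p]) [μ.IsAddHaarMeasure]

lemma Bp_meas_toReal (hμ : μ Set.univ = 1) (j : ℕ) :
    (μ (Bp p j)).toReal = ((p:ℝ)⁻¹)^j := by
  rw [Bp, padic_ball_measure μ hμ j]
  rw [ENNReal.toReal_inv, ENNReal.toReal_pow, ENNReal.toReal_natCast, inv_pow]

lemma ann_meas_toReal (hμ : μ Set.univ = 1) (j : ℕ) :
    (μ (Bp p j \ Bp p (j+1))).toReal = ((p:ℝ)⁻¹)^j - ((p:ℝ)⁻¹)^(j+1) := by
  have hp0 : (0:ℝ) < p := by exact_mod_cast hp.out.pos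
  have hsub : Bp p (j+1) ⊆ Bp p j := by
    intro x hx
    simp only [Bp, Set.mem_setOf_eq] at hx ⊢
    refine le_trans hx ?_
    have hb : (1:ℝ) ≤ p := by exact_mod_cast hp.out.one_le
    apply zpow_le_zpow_right₀ hb
    push_cast; omega
  have hfin : μ (Bp p (j+1)) ≠ ⊤ := by
    rw [Bp, padic_ball_measure μ hμ]; simp [hp.out.ne_zero]
  rw [measure_diff hsub (Bp_measurable (j+1)).nullMeasurableSet hfin]
  have hle : μ (Bp p (j+1)) ≤ μ (Bp p j) := measure_mono hsub
  have hfin2 : μ (Bp p j) ≠ ⊤ := by rw [Bp, padic_ball_measure μ hμ]; simp [hp.out.ne_zero]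
  rw [ENNReal.toReal_sub_of_le hle hfin2, Bp_meas_toReal μ hμ, Bp_meas_toReal μ hμ]
end

section
variable [MeasurableSpace ℤ_[p]] [BorelSpace ℤ_[p]]
  (μ : Measure ℤ_[p]) [μ.IsAddHaarMeasure]

lemma inner_integral (hμ : μ Set.univ = 1) (k : ℕ) :
    ∫ y in {y : ℤ_[p] | (p:ℝ)^(-(k:ℤ)) ≤ ‖y‖}, ‖y‖⁻¹ ∂μ
      = ((k:ℝ)+1) * (1 - (p:ℝ)⁻¹) := by
  have hp1 : (1:ℝ) < p := by exact_mod_cast hp.out.one_lt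
  have hp0 : (0:ℝ) < p := by linarith
  set A : ℕ → Set ℤ_[p] := fun j => Bp p j \ Bp p (j+1) with hA
  have hSet : {y : ℤ_[p] | (p:ℝ)^(-(k:ℤ)) ≤ ‖y‖} = ⋃ j ∈ Finset.range (k+1), A j := by
    ext y
    simp only [Set.mem_setOf_eq, Set.mem_iUnion, Finset.mem_range, hA, mem_ann_iff]
    constructor
    · intro hy
      have hy0 : y ≠ 0 := by
        rintro rfl; rw [norm_zero] at hy
        exact absurd hy (not_le.mpr (by positivity))
      have hnorm := PadicInt.norm_eq_zpow_neg_valuation hy0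
      have hvnn : (0:ℤ) ≤ y.valuation := by positivity
      refine ⟨(y.valuation:ℤ).toNat, ?_, ?_⟩
      · rw [hnorm] at hy
        have := (zpow_le_zpow_iff_right₀ hp1).mp hy
        omega
      · rw [hnorm]; congr 1
    · rintro ⟨j, hj, hj2⟩
      rw [hj2]
      apply zpow_le_zpow_right₀ (le_of_lt hp1)
      omega
  rw [hSet]
  have hmeas : ∀ j ∈ Finset.range (k+1), MeasurableSet (A j) :=
    fun j _ => (Bp_measurable j).diff (Bp_measurable (j+1))
  have hdisj : Set.Pairwise ↑(Finset.range (k+1)) (Function.onFun Disjoint A) := by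
    intro i _ j _ hij
    refine Set.disjoint_left.mpr (fun x hxi hxj => hij ?_)
    rw [hA] at hxi hxj
    rw [mem_ann_iff] at hxi hxj
    have := hxi.symm.trans hxj
    have h2 := neg_injective (zpow_right_injective₀ hp0 hp1.ne' this)
    exact_mod_cast h2
  have hEq : ∀ j : ℕ, Set.EqOn (fun y : ℤ_[p] => ‖y‖⁻¹)
      (fun _ => ((p:ℝ)^(-(j:ℤ)))⁻¹) (A j) := by
    intro j y hy
    rw [hA] at hy
    simp only
    rw [mem_ann_iff.mp hy]
  have hint : ∀ j ∈ Finset.range (k+1), IntegrableOn (fun y : ℤ_[p] => ‖y‖⁻¹) (A j) μ := by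
    intro j hj
    have : IntegrableOn (fun _ : ℤ_[p] => ((p:ℝ)^(-(j:ℤ)))⁻¹) (A j) μ :=
      integrableOn_const (lt_of_le_of_lt (measure_mono (Set.subset_univ _))
        (by rw [hμ]; exact ENNReal.one_lt_top)).ne
    exact this.congr_fun (fun y hy => ((hEq j) hy).symm) (hmeas j hj)
  rw [integral_biUnion_finset _ hmeas hdisj hint]
  have hterm : ∀ j ∈ Finset.range (k+1),
      ∫ y in A j, ‖y‖⁻¹ ∂μ = 1 - (p:ℝ)⁻¹ := by
    intro j hj
    rw [setIntegral_congr_fun (hmeas j hj) (hEq j), setIntegral_const, smul_eq_mul,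
      hA]
    simp only [measureReal_def]; rw [ann_meas_toReal μ hμ j]
    rw [zpow_neg, zpow_natCast, inv_inv]
    field_simp
    have h : (p:ℝ)^j * (p:ℝ)⁻¹^j = 1 := by rw [← mul_pow, mul_inv_cancel₀ hp0.ne', one_pow]
    have h2 : (p:ℝ) * (p:ℝ)⁻¹ = 1 := mul_inv_cancel₀ hp0.ne'
    linear_combination (-((p:ℝ)^j * (p:ℝ)⁻¹^j)) * h2 + ((p:ℝ) - 1) * h
  rw [Finset.sum_congr rfl hterm, Finset.sum_const, Finset.card_range, nsmul_eq_mul]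
  push_cast; ring
end

lemma key_norm_le (hodd : p ≠ 2) (η : ℤ_[p]) (hη : η ≠ 0) (m : ℕ)
    (hval : η.valuation = 2*m)
    (hsq : ¬ ∃ x : ℚ_[p], x ^ 2 = (η : ℚ_[p])) (x : ℤ_[p])
    (hx : ‖x‖ ≤ (p:ℝ)^(-(m:ℤ))) :
    ‖η - x^2‖ = (p:ℝ)^(-((2*m:ℕ):ℤ)) := by
  have hp1 : (1:ℝ) < p := by exact_mod_cast hp.out.one_lt
  have hp0 : (0:ℝ) < p := by linarith
  have hnη : ‖η‖ = (p:ℝ)^(-((2*m:ℕ):ℤ)) := by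
    rw [PadicInt.norm_eq_zpow_neg_valuation hη, hval]
  have hxsq : ‖x^2‖ = ‖x‖^2 := norm_pow x 2
  have hle : ‖x^2‖ ≤ ‖η‖ := by
    rw [hxsq, hnη]
    calc ‖x‖^2 ≤ ((p:ℝ)^(-(m:ℤ)))^2 := by
          apply pow_le_pow_left₀ (norm_nonneg x) hx
      _ = (p:ℝ)^(-((2*m:ℕ):ℤ)) := by
          rw [← zpow_natCast ((p:ℝ)^(-(m:ℤ))) 2, ← zpow_mul]; congr 1; push_cast; ring
  rcases lt_or_eq_of_le hle with hlt | heq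
  · -- distinct norms
    have : ‖η - x^2‖ = max ‖η‖ ‖-(x^2)‖ := by
      rw [sub_eq_add_neg]
      exact PadicInt.norm_add_eq_max_of_ne (by rw [norm_neg]; exact ne_of_gt hlt)
    rw [this, norm_neg, max_eq_left (le_of_lt hlt), hnη]
  · -- equal norms: use Hensel to exclude strict drop
    have hub : ‖η - x^2‖ ≤ ‖η‖ := by
      rw [sub_eq_add_neg]
      refine le_trans (PadicInt.nonarchimedean _ _) ?_
      rw [norm_neg, heq, max_self]
    rcases lt_or_eq_of_le hub with hlt2 | heq2
    · exfalso
      set F : Polynomial ℤ_[p] := Polynomial.X^2 - Polynomial.C η with hF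
      have hevala : F.eval x = x^2 - η := by simp [hF]
      have hderiv : F.derivative.eval x = 2*x := by
        simp [hF, Polynomial.derivative_sub, Polynomial.derivative_X_pow, one_add_one_eq_two]
      have h2 : ‖(2:ℤ_[p])‖ = 1 := by
        rcases lt_or_eq_of_le (PadicInt.norm_le_one (2:ℤ_[p])) with h | h
        · exfalso
          have := (PadicInt.norm_int_lt_one_iff_dvd 2).mp (by exact_mod_cast h)
          have hp2 : p ∣ 2 := by exact_mod_cast this
          exact hodd ((Nat.prime_dvd_prime_iff_eq hp.out Nat.prime_two).mp hp2)
        · exact h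
      have hcond : ‖F.eval x‖ < ‖F.derivative.eval x‖^2 := by
        rw [hevala, hderiv, norm_mul, h2, one_mul, norm_sub_rev, ← hxsq, heq]
        exact hlt2
      obtain ⟨z, hz, -⟩ := hensels_lemma hcond
      rw [hF] at hz
      simp only [Polynomial.coe_aeval_eq_eval, Polynomial.eval_sub, Polynomial.eval_pow, Polynomial.eval_X,
        Polynomial.eval_C, sub_eq_zero] at hz
      exact hsq ⟨(z:ℚ_[p]), by exact_mod_cast congrArg (fun t : ℤ_[p] => (t:ℚ_[p])) hz⟩
    · rw [heq2, hnη]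

lemma key_norm_gt (η : ℤ_[p]) (hη : η ≠ 0) (m : ℕ)
    (hval : η.valuation = 2*m) (x : ℤ_[p])
    (hx : ¬ ‖x‖ ≤ (p:ℝ)^(-(m:ℤ))) :
    (x.valuation:ℤ).toNat < m ∧
    ‖η - x^2‖ = (p:ℝ)^(-((2*(x.valuation:ℤ).toNat:ℕ):ℤ)) := by
  have hp1 : (1:ℝ) < p := by exact_mod_cast hp.out.one_lt
  have hx0 : x ≠ 0 := by
    rintro rfl; exact hx (by rw [norm_zero]; positivity)
  have hnx : ‖x‖ = (p:ℝ)^(-(x.valuation:ℤ)) := PadicInt.norm_eq_zpow_neg_valuation hx0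
  have hvnn : (0:ℤ) ≤ x.valuation := by positivity
  have hvlt : x.valuation < m := by
    by_contra h
    push_neg at h
    exact hx (by rw [hnx]; apply zpow_le_zpow_right₀ (le_of_lt hp1); omega)
  have hnη : ‖η‖ = (p:ℝ)^(-((2*m:ℕ):ℤ)) := by
    rw [PadicInt.norm_eq_zpow_neg_valuation hη, hval]
  have hxsq : ‖x^2‖ = (p:ℝ)^(-((2*(x.valuation:ℤ).toNat:ℕ):ℤ)) := by
    rw [norm_pow, hnx, ← zpow_natCast ((p:ℝ)^(-(x.valuation:ℤ))) 2, ← zpow_mul]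
    congr 1; omega
  have hgt : ‖η‖ < ‖x^2‖ := by
    rw [hnη, hxsq]
    apply zpow_lt_zpow_right₀ hp1
    omega
  constructor
  · omega
  · have : ‖η - x^2‖ = max ‖η‖ ‖-(x^2)‖ := by
      rw [sub_eq_add_neg]
      exact PadicInt.norm_add_eq_max_of_ne (by rw [norm_neg]; exact ne_of_lt hgt)
    rw [this, norm_neg, max_eq_right (le_of_lt hgt), hxsq]

lemma alg_sum (q : ℝ) (m : ℕ) :
    (∑ j ∈ Finset.range m, (2*(j:ℝ)+1) * (q^j - q^(j+1)) + (2*(m:ℝ)+1)*q^m) * (1-q)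
      = 1 + q - 2*q^(m+1) := by
  induction m with
  | zero => simp; ring
  | succ n ih =>
    rw [Finset.sum_range_succ]
    push_cast
    have h1 : q^(n+1+1) = q^(n+1) * q := by ring
    have h2 : q^(n+1) = q^n * q := by ring
    rw [h1, h2] at *
    linear_combination ih


/-- For an odd prime `p`, a Haar probability measure `μ` on `ℤ_p`, and a
nonzero `η ∈ ℤ_p` of even valuation `2m` which is not a square in `ℚ_p`,
`(1 + p⁻¹)⁻¹ · ∫_x ( ∫_{{y : |η − x²| ≤ |y|}} |y|⁻¹ dμ ) dμ = 1 − 2·p^{−m}/(p+1)`. -/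
theorem stmt_18 (p : ℕ) [Fact p.Prime] (hodd : p ≠ 2)
    [MeasurableSpace ℤ_[p]] [BorelSpace ℤ_[p]]
    (μ : Measure ℤ_[p]) [μ.IsAddHaarMeasure] (hμ : μ Set.univ = 1)
    (η : ℤ_[p]) (hη : η ≠ 0) (m : ℕ) (hval : η.valuation = 2 * m)
    (hsq : ¬ ∃ x : ℚ_[p], x ^ 2 = (η : ℚ_[p])) :
    (1 + (p : ℝ)⁻¹)⁻¹ *
        ∫ x : ℤ_[p], (∫ y in {y : ℤ_[p] | ‖η - x ^ 2‖ ≤ ‖y‖}, ‖y‖⁻¹ ∂μ) ∂μ =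
      1 - 2 * (p : ℝ) ^ (-(m : ℤ)) / ((p : ℝ) + 1) := by
  have hp1 : (1:ℝ) < p := by exact_mod_cast (Fact.out : p.Prime).one_lt
  have hp0 : (0:ℝ) < p := by linarith
  set q : ℝ := (p:ℝ)⁻¹ with hq
  have hq0 : 0 < q := by positivity
  -- the inner integral as a function of x
  set g : ℤ_[p] → ℝ := fun x =>
    if ‖x‖ ≤ (p:ℝ)^(-(m:ℤ)) then (2*(m:ℝ)+1) * (1 - q)
    else (2*((x.valuation:ℤ).toNat:ℝ)+1) * (1 - q) with hg
  have hinner : ∀ x : ℤ_[p],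
      (∫ y in {y : ℤ_[p] | ‖η - x ^ 2‖ ≤ ‖y‖}, ‖y‖⁻¹ ∂μ) = g x := by
    intro x
    by_cases h : ‖x‖ ≤ (p:ℝ)^(-(m:ℤ))
    · have hk := key_norm_le hodd η hη m hval hsq x h
      rw [show {y : ℤ_[p] | ‖η - x ^ 2‖ ≤ ‖y‖}
          = {y : ℤ_[p] | (p:ℝ)^(-((2*m:ℕ):ℤ)) ≤ ‖y‖} by rw [← hk]]
      rw [inner_integral μ hμ (2*m), hg]
      simp only [h, if_true]
      push_cast; ring
    · obtain ⟨hlt, hk⟩ := key_norm_gt η hη m hval x h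
      rw [show {y : ℤ_[p] | ‖η - x ^ 2‖ ≤ ‖y‖}
          = {y : ℤ_[p] | (p:ℝ)^(-((2*(x.valuation:ℤ).toNat:ℕ):ℤ)) ≤ ‖y‖} by rw [← hk]]
      rw [inner_integral μ hμ (2*(x.valuation:ℤ).toNat), hg]
      simp only [h, if_false]
      push_cast; ring
  rw [show (fun x : ℤ_[p] => ∫ y in {y : ℤ_[p] | ‖η - x ^ 2‖ ≤ ‖y‖}, ‖y‖⁻¹ ∂μ) = g
    from funext hinner]
  -- partition of ℤ_[p]
  set t : ℕ → Set ℤ_[p] := fun j => if j = m then Bp p m else (Bp p j \ Bp p (j+1)) with ht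
  have htmeas : ∀ j ∈ Finset.range (m+1), MeasurableSet (t j) := by
    intro j _
    rw [ht]
    by_cases hj : j = m
    · simp only [hj, if_true]; exact Bp_measurable m
    · simp only [hj, if_false]; exact (Bp_measurable j).diff (Bp_measurable (j+1))
  have hnorm_ann : ∀ {j : ℕ} {x : ℤ_[p]}, x ∈ Bp p j \ Bp p (j+1) → ‖x‖ = (p:ℝ)^(-(j:ℤ)) :=
    fun {j} {x} hx => mem_ann_iff.mp hx
  have hval_ann : ∀ {j : ℕ} {x : ℤ_[p]}, x ∈ Bp p j \ Bp p (j+1) → x.valuation = j := by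
    intro j x hx
    have hn := hnorm_ann hx
    have hx0 : x ≠ 0 := by
      rintro rfl; rw [norm_zero] at hn
      exact absurd hn.symm (ne_of_gt (by positivity))
    have := (PadicInt.norm_eq_zpow_neg_valuation hx0).symm.trans hn
    exact_mod_cast neg_injective (zpow_right_injective₀ hp0 hp1.ne' this)
  have hnot_le : ∀ {j : ℕ}, j < m → ∀ {x : ℤ_[p]}, x ∈ Bp p j \ Bp p (j+1) →
      ¬ ‖x‖ ≤ (p:ℝ)^(-(m:ℤ)) := by
    intro j hj x hx
    rw [hnorm_ann hx]
    apply not_le.mpr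
    apply zpow_lt_zpow_right₀ hp1
    omega
  have hdisj : Set.Pairwise ↑(Finset.range (m+1)) (Function.onFun Disjoint t) := by
    intro i hi j hj hij
    simp only [Finset.coe_range, Set.mem_Iio] at hi hj
    refine Set.disjoint_left.mpr (fun x hxi hxj => ?_)
    rw [ht] at hxi hxj
    by_cases him : i = m <;> by_cases hjm : j = m
    · exact hij (him.trans hjm.symm)
    · simp only [him, if_true] at hxi
      simp only [hjm, if_false] at hxj
      exact hnot_le (by omega) hxj hxi
    · simp only [him, if_false] at hxi
      simp only [hjm, if_true] at hxj
      exact hnot_le (by omega) hxi hxj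
    · simp only [him, if_false] at hxi
      simp only [hjm, if_false] at hxj
      exact hij (by exact_mod_cast (hval_ann hxi).symm.trans (hval_ann hxj))
  have huniv : Set.univ = ⋃ j ∈ Finset.range (m+1), t j := by
    ext x
    simp only [Set.mem_univ, true_iff, Set.mem_iUnion, Finset.mem_range]
    by_cases h : ‖x‖ ≤ (p:ℝ)^(-(m:ℤ))
    · exact ⟨m, by omega, by rw [ht]; simp only [if_true]; exact h⟩
    · have hx0 : x ≠ 0 := by
        rintro rfl; exact h (by rw [norm_zero]; positivity)
      have hnx : ‖x‖ = (p:ℝ)^(-(x.valuation:ℤ)) := PadicInt.norm_eq_zpow_neg_valuation hx0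
      have hvnn : (0:ℤ) ≤ x.valuation := by positivity
      have hvlt : x.valuation < m := by
        by_contra hc
        push_neg at hc
        exact h (by rw [hnx]; apply zpow_le_zpow_right₀ (le_of_lt hp1); omega)
      refine ⟨(x.valuation:ℤ).toNat, by omega, ?_⟩
      rw [ht]
      simp only [show (x.valuation:ℤ).toNat ≠ m by omega, if_false]
      rw [mem_ann_iff, hnx]
      congr 1
  -- g is constant on each piece
  have hgconst : ∀ j ∈ Finset.range (m+1),
      Set.EqOn g (fun _ => (2*(min j m:ℝ)+1) * (1 - q)) (t j) := by
    intro j hjr x hx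
    simp only [ht] at hx
    by_cases hj : j = m
    · subst hj
      rw [if_pos rfl] at hx
      have hx' : ‖x‖ ≤ (p:ℝ)^(-(j:ℤ)) := hx
      simp only [hg, hx', if_true, min_self]
    · rw [if_neg hj] at hx
      have hjm : j < m := by
        simp only [Finset.mem_range] at hjr; omega
      have hnle := hnot_le hjm hx
      simp only [hg, hnle, if_false]
      rw [hval_ann hx]
      simp only [Int.toNat_natCast]
      rw [min_eq_left (by exact_mod_cast le_of_lt hjm)]
  have hint : ∀ j ∈ Finset.range (m+1), IntegrableOn g (t j) μ := by
    intro j hj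
    have : IntegrableOn (fun _ : ℤ_[p] => (2*(min j m:ℝ)+1) * (1 - q)) (t j) μ :=
      integrableOn_const (lt_of_le_of_lt (measure_mono (Set.subset_univ _))
        (by rw [hμ]; exact ENNReal.one_lt_top)).ne
    exact this.congr_fun (fun x hx => (hgconst j hj hx).symm) (htmeas j hj)
  have hmain : ∫ x : ℤ_[p], g x ∂μ
      = ∑ j ∈ Finset.range (m+1), (2*(min j m:ℝ)+1) * (1 - q) * (μ (t j)).toReal := by
    rw [← setIntegral_univ, huniv, integral_biUnion_finset _ htmeas hdisj hint]
    refine Finset.sum_congr rfl (fun j hj => ?_)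
    rw [setIntegral_congr_fun (htmeas j hj) (hgconst j hj), setIntegral_const, smul_eq_mul]
    rw [measureReal_def]; ring
  -- measures of pieces
  have hmeasval : ∀ j ∈ Finset.range (m+1),
      (μ (t j)).toReal = if j = m then q^m else q^j - q^(j+1) := by
    intro j _
    rw [ht]
    by_cases hj : j = m
    · simp only [hj, if_true]
      exact Bp_meas_toReal μ hμ m
    · simp only [hj, if_false]
      exact ann_meas_toReal μ hμ j
  rw [hmain]
  have hsum : ∑ j ∈ Finset.range (m+1), (2*(min j m:ℝ)+1) * (1 - q) * (μ (t j)).toReal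
      = (∑ j ∈ Finset.range m, (2*(j:ℝ)+1) * (q^j - q^(j+1)) + (2*(m:ℝ)+1)*q^m) * (1-q) := by
    rw [Finset.sum_range_succ]
    rw [hmeasval m (by simp), if_pos rfl, min_self]
    conv_rhs => rw [add_mul, Finset.sum_mul]
    congr 1
    · refine Finset.sum_congr rfl (fun j hj => ?_)
      have hjm : j < m := Finset.mem_range.mp hj
      rw [hmeasval j (Finset.mem_range.mpr (by omega)), if_neg (by omega)]
      rw [min_eq_left (by exact_mod_cast le_of_lt hjm)]
      ring
    · ring
  rw [hsum, alg_sum,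
    show (p:ℝ)^(-(m:ℤ)) = q^m from by rw [zpow_neg, zpow_natCast, hq, inv_pow]]
  rw [hq]
  have hpne : (p:ℝ) ≠ 0 := hp0.ne'
  have h1q : (p:ℝ) + 1 ≠ 0 := by positivity
  field_simp
  have h2 : (p:ℝ) * (1/(p:ℝ)) = 1 := by field_simp
  linear_combination (-2*(1/(p:ℝ))^m) * h2
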